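/- arXiv:1704.06979 — 6 statements merged into one kernel-verified Lean document; each statement's English description precedes it below -/
import Mathlib

section
/- A nonzero real polynomial with exactly k nonzero coefficients has at most k-1 positive real roots, counted with multiplicity. -/
open Polynomial

namespace SparseAux

/-- Rolle step restricted to positive roots: toFinset version. -/
lemma step1 (p : ℝ[X]) (hp : p ≠ 0) (hp' : derivative p ≠ 0) :
    (p.roots.filter (fun x => 0 < x)).toFinset.card ≤
      (((derivative p).roots.filter (fun x => 0 < x)).toFinset \
        (p.roots.filter (fun x => 0 < x)).toFinset).card + 1 := by
  refine Finset.card_le_diff_of_interleaved fun x hx y hy hxy hxy' => ?_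
  rw [Multiset.mem_toFinset, Multiset.mem_filter, mem_roots hp] at hx hy
  obtain ⟨z, hz1, hz2⟩ := exists_deriv_eq_zero hxy p.continuousOn (hx.1.trans hy.1.symm)
  refine ⟨z, ?_, hz1⟩
  rw [Multiset.mem_toFinset, Multiset.mem_filter, mem_roots hp']
  exact ⟨by rwa [IsRoot, ← p.deriv], hx.2.trans hz1.1⟩

lemma posroots_le_derivative (p : ℝ[X]) :
    Multiset.card (p.roots.filter (fun x => 0 < x)) ≤
      Multiset.card ((derivative p).roots.filter (fun x => 0 < x)) + 1 := by
  rcases eq_or_ne (derivative p) 0 with hp' | hp'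
  · rcases eq_or_ne p 0 with rfl | hp
    · simp
    · rw [eq_C_of_derivative_eq_zero hp', roots_C]
      simp
  have hp : p ≠ 0 := ne_of_apply_ne derivative (by rwa [derivative_zero])
  set pr := p.roots.filter (fun x => 0 < x) with hpr
  set dr := (derivative p).roots.filter (fun x => 0 < x) with hdr
  have hcount : ∀ x ∈ pr.toFinset, pr.count x = p.rootMultiplicity x := by
    intro x hx
    rw [Multiset.mem_toFinset, hpr, Multiset.mem_filter] at hx
    rw [hpr, Multiset.count_filter, if_pos hx.2, count_roots]
  have hdcount : ∀ x ∈ pr.toFinset, (derivative p).rootMultiplicity x = dr.count x := by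
    intro x hx
    rw [Multiset.mem_toFinset, hpr, Multiset.mem_filter] at hx
    rw [hdr, Multiset.count_filter, if_pos hx.2, count_roots]
  calc
    Multiset.card pr = ∑ x ∈ pr.toFinset, pr.count x :=
      (Multiset.toFinset_sum_count_eq _).symm
    _ = ∑ x ∈ pr.toFinset, (pr.count x - 1 + 1) :=
      (Eq.symm <| Finset.sum_congr rfl fun _ hx => tsub_add_cancel_of_le <|
        Nat.succ_le_iff.2 <| Multiset.count_pos.2 <| Multiset.mem_toFinset.1 hx)
    _ = (∑ x ∈ pr.toFinset, (p.rootMultiplicity x - 1)) + pr.toFinset.card := by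
      rw [Finset.sum_add_distrib, Finset.card_eq_sum_ones]
      congr 1
      exact Finset.sum_congr rfl fun x hx => by rw [hcount x hx]
    _ ≤ (∑ x ∈ pr.toFinset, (derivative p).rootMultiplicity x) +
          ((dr.toFinset \ pr.toFinset).card + 1) :=
      add_le_add
        (Finset.sum_le_sum fun _ _ =>
          rootMultiplicity_sub_one_le_derivative_rootMultiplicity _ _)
        (step1 p hp hp')
    _ ≤ (∑ x ∈ pr.toFinset, dr.count x) +
          ((∑ x ∈ dr.toFinset \ pr.toFinset, dr.count x) + 1) := by
      refine add_le_add (le_of_eq ?_) (add_le_add_left ?_ _)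
      · exact Finset.sum_congr rfl fun x hx => hdcount x hx
      · refine (Finset.card_eq_sum_ones _).trans_le ?_
        refine Finset.sum_le_sum fun x hx => Nat.succ_le_iff.2 ?_
        rw [Multiset.count_pos, ← Multiset.mem_toFinset]
        exact (Finset.mem_sdiff.1 hx).1
    _ = Multiset.card dr + 1 := by
      rw [← add_assoc, ← Finset.sum_union Finset.disjoint_sdiff,
        Finset.union_sdiff_self_eq_union, ← Multiset.toFinset_sum_count_eq,
        ← Finset.sum_subset Finset.subset_union_right]
      intro x _ hx₂
      simpa only [Multiset.mem_toFinset, Multiset.count_eq_zero] using hx₂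

end SparseAux

theorem sparse_poly_positive_roots (f : Polynomial ℝ) (k : ℕ)
    (hf : f ≠ 0) (hk : f.support.card = k) :
    (f.roots.filter (fun x => 0 < x)).card ≤ k - 1 := by
  induction k using Nat.strong_induction_on generalizing f with
  | _ k ih =>
  subst hk
  -- factor out X ^ natTrailingDegree
  set m := f.natTrailingDegree with hm
  have hdvd : (X : ℝ[X]) ^ m ∣ f := by
    rw [X_pow_dvd_iff]
    exact fun d hd => coeff_eq_zero_of_lt_natTrailingDegree hd
  obtain ⟨g, hg⟩ := hdvd
  have hg0 : g ≠ 0 := fun h => hf (by rw [hg, h, mul_zero])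
  have hgc0 : g.coeff 0 ≠ 0 := by
    have : f.coeff m = g.coeff 0 := by
      rw [hg]
      simpa using coeff_X_pow_mul g m 0
    rw [← this]
    exact trailingCoeff_nonzero_iff_nonzero.2 hf
  -- support card of g equals support card of f
  have hsupp : f.support = g.support.image (· + m) := by
    ext n
    simp only [mem_support_iff, Finset.mem_image, hg, coeff_X_pow_mul']
    constructor
    · intro h
      split_ifs at h with h'
      · exact ⟨n - m, h, Nat.sub_add_cancel h'⟩
      · exact absurd rfl h
    · rintro ⟨a, ha, rfl⟩
      simpa using ha
  have hcard : g.support.card = f.support.card := by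
    rw [hsupp, Finset.card_image_of_injective _ (add_left_injective m)]
  -- positive roots of f = positive roots of g
  have hroots : f.roots.filter (fun x => 0 < x) = g.roots.filter (fun x => 0 < x) := by
    rw [hg, roots_mul (hg ▸ hf), Multiset.filter_add, roots_pow, roots_X]
    have h0 : Multiset.filter (fun x => 0 < x) (m • ({0} : Multiset ℝ)) = 0 := by
      rw [Multiset.nsmul_singleton, Multiset.filter_eq_nil]
      intro a ha
      rw [Multiset.eq_of_mem_replicate ha]
      simp
    rw [h0, zero_add]
  have hk1 : 1 ≤ f.support.card := Finset.card_pos.2 (nonempty_support_iff.2 hf)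
  rcases eq_or_ne (derivative g) 0 with hdg | hdg
  · rw [hroots, eq_C_of_derivative_eq_zero hdg, roots_C]
    simp
  · have hsub : (derivative g).support ⊆ (g.support.erase 0).image (fun n => n - 1) := by
      intro n hn
      rw [mem_support_iff, coeff_derivative] at hn
      have h1 : g.coeff (n + 1) ≠ 0 := fun h => hn (by simp [h])
      exact Finset.mem_image.2 ⟨n + 1,
        Finset.mem_erase.2 ⟨Nat.succ_ne_zero n, mem_support_iff.2 h1⟩, rfl⟩
    have h0mem : (0 : ℕ) ∈ g.support := mem_support_iff.2 hgc0
    have hgpos : 0 < g.support.card := Finset.card_pos.2 ⟨0, h0mem⟩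
    have hklt : (derivative g).support.card < f.support.card := by
      calc (derivative g).support.card
          ≤ ((g.support.erase 0).image (fun n => n - 1)).card := Finset.card_le_card hsub
        _ ≤ (g.support.erase 0).card := Finset.card_image_le
        _ = g.support.card - 1 := Finset.card_erase_of_mem h0mem
        _ < f.support.card := by omega
    have hd1 : 1 ≤ (derivative g).support.card :=
      Finset.card_pos.2 (nonempty_support_iff.2 hdg)
    have IH := ih _ hklt (derivative g) hdg rfl
    have key := SparseAux.posroots_le_derivative g
    rw [hroots]
    omega
end

section
/- Let F ∈ ℂ[x] be a polynomial of degree n, m ∈ ℂ, r > 0, l a natural number, and suppose |F^{(l)}(m)| r^l / l! > Σ_{i ≠ l} |F^{(i)}(m)| r^i / i!. Then the closed disk of radius r centered at m contains exactly l roots of F counted with multiplicity. -/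
open Polynomial Metric Complex

local notation "π" => Real.pi

private lemma pellet_diff_prod (s : Multiset ℂ) :
    Differentiable ℂ (fun z => (s.map (fun t => z - t)).prod) := by
  induction s using Multiset.induction_on with
  | empty => simpa using differentiable_const (1 : ℂ)
  | cons t s ih =>
    simp only [Multiset.map_cons, Multiset.prod_cons]
    exact ((differentiable_id.sub_const t)).mul ih

private lemma pellet_prod_ne_zero {s : Multiset ℂ} {z : ℂ} (hz : ∀ t ∈ s, z ≠ t) :
    (s.map (fun t => z - t)).prod ≠ 0 := by
  induction s using Multiset.induction_on with
  | empty => simp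
  | cons t s ih =>
    simp only [Multiset.map_cons, Multiset.prod_cons]
    exact mul_ne_zero (sub_ne_zero.2 (hz t (Multiset.mem_cons_self t s)))
      (ih fun u hu => hz u (Multiset.mem_cons_of_mem hu))

private lemma pellet_logDeriv_prod (s : Multiset ℂ) {z : ℂ} (hz : ∀ t ∈ s, z ≠ t) :
    logDeriv (fun z => (s.map (fun t => z - t)).prod) z
      = (s.map (fun t => (z - t)⁻¹)).sum := by
  induction s using Multiset.induction_on with
  | empty => simp [logDeriv_const]
  | cons t s ih =>
    have h1 : z - t ≠ 0 := sub_ne_zero.2 (hz t (Multiset.mem_cons_self t s))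
    have hz' : ∀ u ∈ s, z ≠ u := fun u hu => hz u (Multiset.mem_cons_of_mem hu)
    have h2 : (s.map (fun t => z - t)).prod ≠ 0 := pellet_prod_ne_zero hz'
    simp only [Multiset.map_cons, Multiset.prod_cons, Multiset.sum_cons]
    rw [logDeriv_mul (f := fun z => z - t) (g := fun z => (s.map (fun t => z - t)).prod)
      z h1 h2 (differentiableAt_id.sub_const t) (pellet_diff_prod s).differentiableAt, ih hz']
    congr 1
    rw [logDeriv_apply]
    simp [deriv_sub_const]

private lemma pellet_integral_add {f g : ℂ → ℂ} {c : ℂ} {R : ℝ}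
    (hf : CircleIntegrable f c R) (hg : CircleIntegrable g c R) :
    (∮ z in C(c, R), (f z + g z)) = (∮ z in C(c, R), f z) + ∮ z in C(c, R), g z := by
  simp only [circleIntegral, smul_add, intervalIntegral.integral_add hf.out hg.out]

private lemma pellet_integral_sum (s : Multiset ℂ) {c : ℂ} {R : ℝ} (hR : 0 < R)
    [DecidablePred (fun t : ℂ => t ∈ ball c R)]
    (hs : ∀ t ∈ s, t ∉ sphere c R) :
    CircleIntegrable (fun z => (s.map (fun t => (z - t)⁻¹)).sum) c R ∧
    (∮ z in C(c, R), (s.map (fun t => (z - t)⁻¹)).sum)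
      = (2 * π * I) * ((s.filter (fun t => t ∈ ball c R)).card : ℂ) := by
  induction s using Multiset.induction_on with
  | empty => simp [circleIntegral]
  | cons t s ih =>
    obtain ⟨ihi, ihv⟩ := ih (fun u hu => hs u (Multiset.mem_cons_of_mem hu))
    have hts : t ∉ sphere c R := hs t (Multiset.mem_cons_self t s)
    have hti : CircleIntegrable (fun z => (z - t)⁻¹) c R :=
      circleIntegrable_sub_inv_iff.2 (Or.inr (by rwa [abs_of_pos hR]))
    have hint : (∮ z in C(c, R), (z - t)⁻¹)
        = if t ∈ ball c R then (2 * π * I) else 0 := by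
      split_ifs with h
      · exact circleIntegral.integral_sub_inv_of_mem_ball h
      · have htcb : t ∉ closedBall c R := by
          intro hmem
          rcases (mem_closedBall.1 hmem).lt_or_eq with hlt | heq
          · exact h (mem_ball.2 hlt)
          · exact hts (mem_sphere.2 heq)
        refine Complex.circleIntegral_eq_zero_of_differentiable_on_off_countable hR.le
          Set.countable_empty ?_ ?_
        · refine ContinuousOn.inv₀ (by fun_prop) ?_
          intro z hz
          exact sub_ne_zero.2 (ne_of_mem_of_not_mem hz htcb)
        · intro z hz
          have : z - t ≠ 0 := sub_ne_zero.2 (ne_of_mem_of_not_mem (ball_subset_closedBall hz.1) htcb)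
          exact (differentiableAt_id.sub_const t).inv this
    refine ⟨by simp only [Multiset.map_cons, Multiset.sum_cons]; exact hti.add ihi, ?_⟩
    have key : (∮ z in C(c, R), ((t ::ₘ s).map (fun u => (z - u)⁻¹)).sum)
        = (∮ z in C(c, R), (z - t)⁻¹) + ∮ z in C(c, R), (s.map (fun u => (z - u)⁻¹)).sum := by
      simp only [Multiset.map_cons, Multiset.sum_cons]
      exact pellet_integral_add hti ihi
    rw [key, hint, ihv, Multiset.filter_cons]
    split_ifs with h
    · simp only [Multiset.card_add, Multiset.card_singleton]
      push_cast
      ring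
    · simp

private lemma pellet_eval_eq_prod (p : Polynomial ℂ) (z : ℂ) :
    p.eval z = p.leadingCoeff * ((p.roots.map (fun t => z - t)).prod) := by
  conv_lhs => rw [(IsAlgClosed.splits p).eq_prod_roots]
  rw [eval_mul, eval_C, eval_multiset_prod, Multiset.map_map]
  congr 1
  congr 1
  apply Multiset.map_congr rfl
  intro t _
  simp

private lemma pellet_argument_principle (p : Polynomial ℂ) {c : ℂ} {R : ℝ} (hR : 0 < R)
    [DecidablePred (fun t : ℂ => t ∈ ball c R)]
    (hp : p ≠ 0) (hsp : ∀ z ∈ sphere c R, p.eval z ≠ 0) :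
    (∮ z in C(c, R), logDeriv (fun w => p.eval w) z)
      = (2 * π * I) * ((p.roots.filter (fun t => t ∈ ball c R)).card : ℂ) := by
  have hlc : p.leadingCoeff ≠ 0 := leadingCoeff_ne_zero.2 hp
  have hroots : ∀ t ∈ p.roots, t ∉ sphere c R := by
    intro t ht hts
    exact hsp t hts (Polynomial.isRoot_of_mem_roots ht)
  have heq : Set.EqOn (logDeriv (fun w => p.eval w))
      (fun z => ((p.roots.map (fun t => (z - t)⁻¹)).sum)) (sphere c R) := by
    intro z hz
    have hz' : ∀ t ∈ p.roots, z ≠ t := fun t ht => ne_of_mem_of_not_mem hz (hroots t ht)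
    have hfun : (fun w => p.eval w)
        = fun w => p.leadingCoeff * ((p.roots.map (fun t => w - t)).prod) := by
      funext w; exact pellet_eval_eq_prod p w
    rw [hfun, logDeriv_const_mul z _ hlc, pellet_logDeriv_prod p.roots hz']
  rw [circleIntegral.integral_congr hR.le heq]
  exact (pellet_integral_sum p.roots hR hroots).2

private lemma pellet_rouche (F G : Polynomial ℂ) {c : ℂ} {R : ℝ} (hR : 0 < R)
    (hlt : ∀ z ∈ sphere c R, ‖F.eval z - G.eval z‖ < ‖G.eval z‖) :
    (∮ z in C(c, R), logDeriv (fun w => F.eval w) z)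
      = ∮ z in C(c, R), logDeriv (fun w => G.eval w) z := by
  have hG : ∀ z ∈ sphere c R, G.eval z ≠ 0 := by
    intro z hz h0
    have := hlt z hz
    simp only [h0, map_zero] at this
    exact (norm_nonneg _).not_gt (by simpa [h0] using hlt z hz)
  have hF : ∀ z ∈ sphere c R, F.eval z ≠ 0 := by
    intro z hz h0
    have := hlt z hz
    rw [h0, zero_sub, norm_neg] at this
    exact lt_irrefl _ this
  set h : ℂ → ℂ := fun z => F.eval z / G.eval z with hh
  have hslit : ∀ z ∈ sphere c R, h z ∈ slitPlane := by
    intro z hz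
    have h1 : ‖h z - 1‖ < 1 := by
      have hGz := hG z hz
      have : h z - 1 = (F.eval z - G.eval z) / G.eval z := by
        simp only [hh]; exact div_sub_one hGz
      rw [this]
      rw [norm_div]
      rw [div_lt_one (by simpa [norm_pos_iff] using hGz)]
      exact hlt z hz
    have := Complex.mem_slitPlane_of_norm_lt_one h1
    simpa using this
  -- the derivative of h
  set d : ℂ → ℂ := fun z =>
    ((derivative F).eval z * G.eval z - F.eval z * (derivative G).eval z) / (G.eval z) ^ 2 with hd
  have hderiv_h : ∀ z ∈ sphere c R, HasDerivAt h (d z) z := by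
    intro z hz
    exact (F.hasDerivAt z).div (G.hasDerivAt z) (hG z hz)
  -- ψ and its derivative
  set γ : ℝ → ℂ := fun θ => circleMap c R θ with hγ
  have hγ_sphere : ∀ θ, γ θ ∈ sphere c R := fun θ => circleMap_mem_sphere c hR.le θ
  set ψ : ℝ → ℂ := fun θ => Complex.log (h (γ θ)) with hψ
  set ψ' : ℝ → ℂ := fun θ => (circleMap 0 R θ * I) * ((h (γ θ))⁻¹ * d (γ θ)) with hψ'
  have hψderiv : ∀ θ, HasDerivAt ψ (ψ' θ) θ := by
    intro θ
    have h1 : HasDerivAt γ (circleMap 0 R θ * I) θ := hasDerivAt_circleMap c R θ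
    have h2 : HasDerivAt h (d (γ θ)) (γ θ) := hderiv_h _ (hγ_sphere θ)
    have h3 : HasDerivAt Complex.log (h (γ θ))⁻¹ (h (γ θ)) :=
      Complex.hasDerivAt_log (hslit _ (hγ_sphere θ))
    have h4 : HasDerivAt (fun z => Complex.log (h z)) ((h (γ θ))⁻¹ * d (γ θ)) (γ θ) :=
      h3.comp _ h2
    have h5 := h4.comp θ h1
    exact (by simpa [hψ', mul_comm, mul_assoc, mul_left_comm] using h5 : HasDerivAt ((fun z => Complex.log (h z)) ∘ γ) (ψ' θ) θ)
  have hψ'cont : Continuous ψ' := by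
    have hγc : Continuous γ := continuous_circleMap c R
    have hFc : Continuous fun θ => F.eval (γ θ) := (F.continuous).comp hγc
    have hGc : Continuous fun θ => G.eval (γ θ) := (G.continuous).comp hγc
    have hF'c : Continuous fun θ => (derivative F).eval (γ θ) := ((derivative F).continuous).comp hγc
    have hG'c : Continuous fun θ => (derivative G).eval (γ θ) := ((derivative G).continuous).comp hγc
    have hGne : ∀ θ, G.eval (γ θ) ≠ 0 := fun θ => hG _ (hγ_sphere θ)
    have hhc : Continuous fun θ => h (γ θ) := hFc.div hGc hGne
    have hhne : ∀ θ, h (γ θ) ≠ 0 := by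
      intro θ
      exact div_ne_zero (hF _ (hγ_sphere θ)) (hGne θ)
    have hdc : Continuous fun θ => d (γ θ) := by
      refine ((hF'c.mul hGc).sub (hFc.mul hG'c)).div (hGc.pow 2) ?_
      intro θ
      exact pow_ne_zero 2 (hGne θ)
    exact ((continuous_circleMap 0 R).mul continuous_const).mul ((hhc.inv₀ hhne).mul hdc)
  have hint0 : (∮ z in C(c, R), logDeriv h z) = 0 := by
    have hrw : (∮ z in C(c, R), logDeriv h z) = ∫ θ in (0:ℝ)..(2*π), ψ' θ := by
      rw [circleIntegral]
      apply intervalIntegral.integral_congr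
      intro θ _
      have hdh : deriv h (γ θ) = d (γ θ) := (hderiv_h _ (hγ_sphere θ)).deriv
      simp only [hψ', logDeriv_apply, deriv_circleMap, smul_eq_mul, hγ, hdh]
      field_simp
      rw [show deriv h (circleMap c R θ) = d (circleMap c R θ) from hdh]
    rw [hrw, intervalIntegral.integral_eq_sub_of_hasDerivAt (fun θ _ => hψderiv θ)
      (hψ'cont.intervalIntegrable _ _)]
    have : γ (2 * π) = γ 0 := by
      have := periodic_circleMap c R 0
      simpa [hγ] using this
    simp [hψ, this]
  -- combine
  have hFi : CircleIntegrable (logDeriv (fun w => F.eval w)) c R := by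
    apply ContinuousOn.circleIntegrable hR.le
    intro z hz
    have : ContinuousOn (fun w => (derivative F).eval w / F.eval w) (sphere c R) :=
      ((derivative F).continuous.continuousOn).div (F.continuous.continuousOn) hF
    refine (this z hz).congr ?_ ?_
    · intro w hw
      simp [logDeriv_apply, Polynomial.deriv]
    · simp [logDeriv_apply, Polynomial.deriv]
  have hGi : CircleIntegrable (logDeriv (fun w => G.eval w)) c R := by
    apply ContinuousOn.circleIntegrable hR.le
    intro z hz
    have : ContinuousOn (fun w => (derivative G).eval w / G.eval w) (sphere c R) :=
      ((derivative G).continuous.continuousOn).div (G.continuous.continuousOn) hG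
    refine (this z hz).congr ?_ ?_
    · intro w hw
      simp [logDeriv_apply, Polynomial.deriv]
    · simp [logDeriv_apply, Polynomial.deriv]
  have hsub : (∮ z in C(c, R), (logDeriv (fun w => F.eval w) z - logDeriv (fun w => G.eval w) z))
      = (∮ z in C(c, R), logDeriv (fun w => F.eval w) z)
        - ∮ z in C(c, R), logDeriv (fun w => G.eval w) z :=
    circleIntegral.integral_sub hFi hGi
  have hcongr : (∮ z in C(c, R), (logDeriv (fun w => F.eval w) z - logDeriv (fun w => G.eval w) z))
      = ∮ z in C(c, R), logDeriv h z := by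
    apply circleIntegral.integral_congr hR.le
    intro z hz
    exact (logDeriv_div z (hF z hz) (hG z hz) (F.differentiableAt) (G.differentiableAt)).symm
  have := hcongr.trans hint0
  rw [hsub] at this
  exact sub_eq_zero.1 this

theorem pellet_Tl_test (F : Polynomial ℂ) (n : ℕ) (hn : F.natDegree = n)
    (m : ℂ) (r : ℝ) (hr : 0 < r) (l : ℕ) (hl : l ≤ n)
    (hT : ‖(Polynomial.derivative^[l] F).eval m‖ * r ^ l / (l.factorial : ℝ) >
      ∑ i ∈ (Finset.range (n + 1)).erase l,
        ‖(Polynomial.derivative^[i] F).eval m‖ * r ^ i / (i.factorial : ℝ)) :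
    (F.roots.filter (fun z => ‖z - m‖ ≤ r)).card = l := by
  classical
  set b : ℕ → ℂ := fun i => (Polynomial.derivative^[i] F).eval m / (i.factorial : ℂ) with hb
  -- Taylor coefficients
  have hhasse : ∀ i, ((Polynomial.hasseDeriv i F).eval m) = b i := by
    intro i
    have h1 : (Polynomial.derivative^[i] F) = i.factorial • (Polynomial.hasseDeriv i F) := by
      have := Polynomial.factorial_smul_hasseDeriv (R := ℂ) (k := i)
      exact (congrFun this F).symm
    have h2 : ((Polynomial.derivative^[i] F).eval m)
        = (i.factorial : ℂ) * (Polynomial.hasseDeriv i F).eval m := by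
      rw [h1]
      simp [nsmul_eq_mul, Polynomial.eval_mul]
    rw [hb]
    simp only []
    rw [h2, mul_div_cancel_left₀ _ (by exact_mod_cast Nat.factorial_ne_zero i)]
  have htaylor : ∀ z : ℂ, F.eval z = ∑ i ∈ Finset.range (n + 1), b i * (z - m) ^ i := by
    intro z
    have h0 : (Polynomial.taylor m F).natDegree < n + 1 := by
      rw [Polynomial.natDegree_taylor, hn]; exact Nat.lt_succ_self n
    have h1 := Polynomial.eval_eq_sum_range' h0 (z - m)
    rw [Polynomial.taylor_eval_sub] at h1
    rw [h1]
    refine Finset.sum_congr rfl fun i _ => ?_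
    rw [Polynomial.taylor_coeff, hhasse]
  -- absolute values of coefficients
  have habs : ∀ i, ‖b i‖
      = ‖(Polynomial.derivative^[i] F).eval m‖ / (i.factorial : ℝ) := by
    intro i
    rw [hb]
    simp [norm_div, Complex.norm_natCast]
  -- the dominance hypothesis in terms of b
  have hT' : ∑ i ∈ (Finset.range (n + 1)).erase l, ‖b i‖ * r ^ i
      < ‖b l‖ * r ^ l := by
    have e1 : ∀ i, ‖b i‖ * r ^ i
        = ‖(Polynomial.derivative^[i] F).eval m‖ * r ^ i / (i.factorial : ℝ) := by
      intro i
      rw [habs]; ring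
    rw [e1]
    calc ∑ i ∈ (Finset.range (n + 1)).erase l, ‖b i‖ * r ^ i
        = ∑ i ∈ (Finset.range (n + 1)).erase l,
            ‖(Polynomial.derivative^[i] F).eval m‖ * r ^ i / (i.factorial : ℝ) :=
          Finset.sum_congr rfl fun i _ => e1 i
      _ < _ := hT
  have hbl : b l ≠ 0 := by
    intro h0
    rw [h0] at hT'
    simp only [norm_zero, zero_mul] at hT'
    exact absurd hT' (not_lt.2 (Finset.sum_nonneg fun i _ => by positivity))
  -- G and its evaluation
  set G : Polynomial ℂ := Polynomial.C (b l) * (Polynomial.X - Polynomial.C m) ^ l with hGdef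
  have hGeval : ∀ z : ℂ, G.eval z = b l * (z - m) ^ l := by
    intro z
    simp [hGdef]
  -- estimate on the sphere
  have hlt : ∀ z ∈ Metric.sphere m r, ‖F.eval z - G.eval z‖ < ‖G.eval z‖ := by
    intro z hz
    have hzm : ‖z - m‖ = r := by
      rw [mem_sphere_iff_norm] at hz
      simpa using hz
    have hFG : F.eval z - G.eval z
        = ∑ i ∈ (Finset.range (n + 1)).erase l, b i * (z - m) ^ i := by
      rw [htaylor z, hGeval z]
      have hmem : l ∈ Finset.range (n + 1) := Finset.mem_range.2 (Nat.lt_succ_of_le hl)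
      rw [← Finset.add_sum_erase _ _ hmem]
      ring
    rw [hFG, hGeval]
    calc ‖∑ i ∈ (Finset.range (n + 1)).erase l, b i * (z - m) ^ i‖
        ≤ ∑ i ∈ (Finset.range (n + 1)).erase l, ‖b i * (z - m) ^ i‖ :=
          norm_sum_le _ _
      _ = ∑ i ∈ (Finset.range (n + 1)).erase l, ‖b i‖ * r ^ i := by
          refine Finset.sum_congr rfl fun i _ => ?_
          rw [norm_mul, norm_pow, hzm]
      _ < ‖b l‖ * r ^ l := hT'
      _ = ‖b l * (z - m) ^ l‖ := by rw [norm_mul, norm_pow, hzm]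
  -- nonvanishing on the sphere
  have hGsp : ∀ z ∈ Metric.sphere m r, G.eval z ≠ 0 := by
    intro z hz h0
    have := hlt z hz
    rw [h0] at this
    simp only [norm_zero] at this
    exact (norm_nonneg _).not_gt this
  have hFsp : ∀ z ∈ Metric.sphere m r, F.eval z ≠ 0 := by
    intro z hz h0
    have := hlt z hz
    rw [h0, zero_sub, norm_neg] at this
    exact lt_irrefl _ this
  have hFne : F ≠ 0 := by
    intro h0
    apply hbl
    rw [hb, h0]
    simp [Function.iterate_fixed (Polynomial.derivative_zero)]
  have hGne : G ≠ 0 := by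
    rw [hGdef]
    exact mul_ne_zero (Polynomial.C_ne_zero.2 hbl)
      (pow_ne_zero l (Polynomial.X_sub_C_ne_zero m))
  -- the two argument principles and Rouché
  have hAP_F := pellet_argument_principle F hr hFne hFsp
  have hAP_G := pellet_argument_principle G hr hGne hGsp
  have hR := pellet_rouche F G hr hlt
  rw [hAP_F, hAP_G] at hR
  have hcard : ((F.roots.filter (fun t => t ∈ Metric.ball m r)).card : ℂ)
      = ((G.roots.filter (fun t => t ∈ Metric.ball m r)).card : ℂ) :=
    mul_left_cancel₀ Complex.two_pi_I_ne_zero (by simpa [mul_assoc] using hR)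
  have hGroots : G.roots = Multiset.replicate l m := by
    rw [hGdef, Polynomial.roots_C_mul _ hbl, Polynomial.roots_pow, Polynomial.roots_X_sub_C]
    simp [Multiset.nsmul_singleton]
  have hGcard : (G.roots.filter (fun t => t ∈ Metric.ball m r)).card = l := by
    rw [hGroots]
    rw [Multiset.filter_eq_self.2 ?_, Multiset.card_replicate]
    intro t ht
    rw [Multiset.eq_of_mem_replicate ht]
    exact Metric.mem_ball_self hr
  have hFcard : (F.roots.filter (fun t => t ∈ Metric.ball m r)).card = l := by
    have := hcard
    rw [hGcard] at this
    exact_mod_cast this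
  -- closed ball versus ball
  have hfilter : F.roots.filter (fun z => ‖z - m‖ ≤ r)
      = F.roots.filter (fun t => t ∈ Metric.ball m r) := by
    refine Multiset.filter_congr fun z hz => ?_
    have hzr : ‖z - m‖ ≠ r := by
      intro heq
      have hzs : z ∈ Metric.sphere m r := by
        rw [mem_sphere_iff_norm]
        simpa using heq
      exact hFsp z hzs (Polynomial.isRoot_of_mem_roots hz)
    constructor
    · intro hle
      rw [Metric.mem_ball, Complex.dist_eq]
      exact lt_of_le_of_ne hle hzr
    · intro hmem
      rw [Metric.mem_ball, Complex.dist_eq] at hmem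
      exact hmem.le
  rw [hfilter]
  exact hFcard
end

section
/- Let F ∈ ℂ[x] have degree n with roots z_1,…,z_n (with multiplicity), let m ∈ ℂ with F(m) ≠ 0, let r > 0, and let a_i be the coefficients of F_Δ(x) = F(m + r·x). Then a_i/a_0 = (r^i / i!) · Σ over i-tuples (j_1,…,j_i) of pairwise distinct indices of ∏_{ℓ=1}^{i} 1/(m - z_{j_ℓ}). -/
open Polynomial Finset

lemma coeff_prod_one_add {α : Type*} [DecidableEq α] (s : Finset α) (w : α → ℂ) (i : ℕ) :
    (∏ j ∈ s, (1 + C (w j) * X)).coeff i = ∑ S ∈ s.powersetCard i, ∏ j ∈ S, w j := by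
  induction s using Finset.induction_on generalizing i with
  | empty =>
    cases i with
    | zero => simp
    | succ k => rw [Finset.powersetCard_eq_empty.2 (by simp)]; simp [coeff_one]
  | insert a s ha ih =>
    rw [Finset.prod_insert ha, add_mul, one_mul, coeff_add, ih, mul_assoc, coeff_C_mul]
    cases i with
    | zero =>
      simp [Polynomial.mul_coeff_zero]
    | succ k =>
      rw [Polynomial.coeff_X_mul, ih, Finset.powersetCard_succ_insert ha,
        Finset.sum_union, Finset.sum_image]
      · rw [Finset.mul_sum]
        congr 1
        refine Finset.sum_congr rfl fun S hS => ?_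
        rw [Finset.prod_insert fun h => ha ((Finset.mem_powersetCard.1 hS).1 h)]
      · intro S hS T hT h
        have hSa : a ∉ S := fun h' => ha ((Finset.mem_powersetCard.1 hS).1 h')
        have hTa : a ∉ T := fun h' => ha ((Finset.mem_powersetCard.1 hT).1 h')
        have := congrArg (Finset.erase · a) h
        simpa [Finset.erase_insert hSa, Finset.erase_insert hTa] using this
      · rw [Finset.disjoint_right]
        rintro S hS hS'
        obtain ⟨T, hT, rfl⟩ := Finset.mem_image.1 hS
        exact ha ((Finset.mem_powersetCard.1 hS').1 (Finset.mem_insert_self a T))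
open Finset

lemma card_fiber_eq (n i : ℕ) (S : Finset (Fin n)) (hS : S.card = i) :
    (Finset.univ.filter (fun σ : Fin i → Fin n =>
      Function.Injective σ ∧ Finset.image σ Finset.univ = S)).card = i.factorial := by
  classical
  let e := S.orderIsoOfFin hS
  have hperm : i.factorial = (Finset.univ : Finset (Equiv.Perm (Fin i))).card := by
    simp [Finset.card_univ, Fintype.card_perm]
  rw [hperm]
  refine (Finset.card_bij (fun π _ => fun ℓ => (e (π ℓ) : Fin n)) ?_ ?_ ?_).symm
  · intro π _
    refine Finset.mem_filter.2 ⟨Finset.mem_univ _, ?_, ?_⟩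
    · exact fun x y h => π.injective (e.injective (Subtype.coe_injective h))
    · apply Finset.Subset.antisymm
      · intro j hj
        obtain ⟨ℓ, _, rfl⟩ := Finset.mem_image.1 hj
        exact (e (π ℓ)).2
      · intro j hj
        exact Finset.mem_image.2 ⟨π.symm (e.symm ⟨j, hj⟩), Finset.mem_univ _, by simp⟩
  · intro π _ π' _ h
    exact Equiv.ext fun ℓ => e.injective (Subtype.coe_injective (congrFun h ℓ))
  · intro σ hσ
    obtain ⟨-, hinj, himg⟩ := Finset.mem_filter.1 hσ
    have hmem : ∀ ℓ, σ ℓ ∈ S := fun ℓ => himg ▸ Finset.mem_image_of_mem σ (Finset.mem_univ ℓ)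
    have hinj' : Function.Injective (fun ℓ => e.symm ⟨σ ℓ, hmem ℓ⟩) := by
      intro x y h
      have : (⟨σ x, hmem x⟩ : {a // a ∈ S}) = ⟨σ y, hmem y⟩ := e.symm.injective h
      exact hinj (congrArg Subtype.val this)
    refine ⟨Equiv.ofBijective _ ((Finite.injective_iff_bijective).1 hinj'), Finset.mem_univ _, ?_⟩
    funext ℓ
    simp [Equiv.ofBijective]

lemma sum_inj_eq (n i : ℕ) (f : Fin n → ℂ) :
    ∑ σ ∈ Finset.univ.filter (fun σ : Fin i → Fin n => Function.Injective σ),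
        ∏ ℓ : Fin i, f (σ ℓ)
      = (i.factorial : ℂ) *
        ∑ S ∈ Finset.powersetCard i (Finset.univ : Finset (Fin n)), ∏ j ∈ S, f j := by
  classical
  rw [← Finset.sum_fiberwise_of_maps_to (g := fun σ : Fin i → Fin n => Finset.image σ Finset.univ)
    (t := Finset.powersetCard i (Finset.univ : Finset (Fin n)))
    (fun σ hσ => Finset.mem_powersetCard.2 ⟨Finset.subset_univ _, by
      rw [Finset.card_image_of_injective _ (Finset.mem_filter.1 hσ).2, Finset.card_univ,
        Fintype.card_fin]⟩)]
  rw [Finset.mul_sum]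
  refine Finset.sum_congr rfl fun S hS => ?_
  have hcard := (Finset.mem_powersetCard.1 hS).2
  have key : ∀ σ ∈ (Finset.univ.filter (fun σ : Fin i → Fin n => Function.Injective σ)).filter
      (fun σ => Finset.image σ Finset.univ = S), (∏ ℓ : Fin i, f (σ ℓ)) = ∏ j ∈ S, f j := by
    intro σ hσ
    obtain ⟨hσ1, hσ2⟩ := Finset.mem_filter.1 hσ
    have hinj := (Finset.mem_filter.1 hσ1).2
    rw [← hσ2, Finset.prod_image (fun x _ y _ h => hinj h)]
  rw [Finset.sum_congr rfl key, Finset.sum_const, Finset.filter_filter, nsmul_eq_mul]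
  congr 1
  rw [card_fiber_eq n i S hcard]

theorem shifted_coeff_ratio (n : ℕ) (c : ℂ) (hc : c ≠ 0) (z : Fin n → ℂ) (m : ℂ) (r : ℝ)
    (hr : 0 < r)
    (F : Polynomial ℂ)
    (hF : F = Polynomial.C c * ∏ j, (Polynomial.X - Polynomial.C (z j)))
    (hFm : F.eval m ≠ 0) (i : ℕ) :
    (F.comp (Polynomial.C m + Polynomial.C (r : ℂ) * Polynomial.X)).coeff i /
      (F.comp (Polynomial.C m + Polynomial.C (r : ℂ) * Polynomial.X)).coeff 0 =
    ((r : ℂ) ^ i / (i.factorial : ℂ)) *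
      ∑ σ ∈ Finset.univ.filter (fun σ : Fin i → Fin n => Function.Injective σ),
        ∏ ℓ : Fin i, (m - z (σ ℓ))⁻¹ := by
  classical
  have hprod : (∏ j, (m - z j)) ≠ 0 := by
    intro h
    apply hFm
    rw [hF]
    simp [Polynomial.eval_prod, h]
  have hne : ∀ j, m - z j ≠ 0 := fun j =>
    Finset.prod_ne_zero_iff.1 hprod j (Finset.mem_univ j)
  set w : Fin n → ℂ := fun j => (r : ℂ) * (m - z j)⁻¹ with hw
  have hfactor : ∀ j, (Polynomial.X - Polynomial.C (z j)).comp
      (Polynomial.C m + Polynomial.C (r : ℂ) * Polynomial.X)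
      = Polynomial.C (m - z j) * (1 + Polynomial.C (w j) * Polynomial.X) := by
    intro j
    have hwj : (m - z j) * w j = (r : ℂ) := by
      rw [hw]
      field_simp
      rw [mul_comm, mul_div_assoc, div_self (hne j), mul_one]
    rw [Polynomial.sub_comp, Polynomial.X_comp, Polynomial.C_comp]
    rw [mul_add, mul_one, ← mul_assoc, ← Polynomial.C_mul, hwj, map_sub]
    ring
  have hG : F.comp (Polynomial.C m + Polynomial.C (r : ℂ) * Polynomial.X)
      = Polynomial.C (c * ∏ j, (m - z j)) * ∏ j, (1 + Polynomial.C (w j) * Polynomial.X) := by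
    rw [hF, Polynomial.mul_comp, Polynomial.C_comp, Polynomial.prod_comp]
    simp_rw [hfactor]
    rw [Finset.prod_mul_distrib, map_mul, map_prod, mul_assoc]
  have hcoeff : ∀ k, (F.comp (Polynomial.C m + Polynomial.C (r : ℂ) * Polynomial.X)).coeff k
      = (c * ∏ j, (m - z j)) *
        ∑ S ∈ Finset.powersetCard k (Finset.univ : Finset (Fin n)), ∏ j ∈ S, w j := by
    intro k
    rw [hG, Polynomial.coeff_C_mul, coeff_prod_one_add]
  have hc0 : (F.comp (Polynomial.C m + Polynomial.C (r : ℂ) * Polynomial.X)).coeff 0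
      = c * ∏ j, (m - z j) := by
    rw [hcoeff 0, Finset.powersetCard_zero]
    simp
  rw [hcoeff i, hc0, mul_comm, mul_div_assoc, div_self (mul_ne_zero hc hprod), mul_one]
  rw [sum_inj_eq n i (fun j => (m - z j)⁻¹)]
  have hfac : ((i.factorial : ℂ)) ≠ 0 := by
    exact_mod_cast Nat.factorial_ne_zero i
  rw [← mul_assoc, div_mul_cancel₀ _ hfac]
  rw [Finset.mul_sum]
  refine Finset.sum_congr rfl fun S hS => ?_
  have hcard := (Finset.mem_powersetCard.1 hS).2
  rw [hw]
  simp only []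
  rw [Finset.prod_mul_distrib, Finset.prod_const, hcard]
end

section
/- Let f ∈ ℝ[x], let I = (a - r, a + r) ⊂ (0, ∞) be an interval containing no root of f and no root of f^{[1]} (so f is monotone and of constant sign on I, with f' = x^{j-1} f^{[1]} where j ≥ 1). Then for every t ∈ (a - r/2, a + r/2), |f(t)| ≥ (r/8)·t^{j-1}·inf_{x∈I}|f^{[1]}(x)|, provided a/r > 2n where n = deg f and j - 1 ≤ n. -/
/-- A continuous polynomial with no root on an open interval has constant sign there. -/
lemma same_sign_aux {p : Polynomial ℝ} {a b : ℝ}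
    (h : ∀ x ∈ Set.Ioo a b, p.eval x ≠ 0) :
    ∀ x ∈ Set.Ioo a b, ∀ y ∈ Set.Ioo a b, 0 < p.eval x * p.eval y := by
  suffices H : ∀ x ∈ Set.Ioo a b, ∀ y ∈ Set.Ioo a b, x ≤ y → 0 < p.eval x * p.eval y by
    intro x hx y hy
    rcases le_total x y with hxy | hxy
    · exact H x hx y hy hxy
    · have := H y hy x hx hxy; nlinarith
  intro x hx y hy hxy
  by_contra hcon
  push_neg at hcon
  have hx0 := h x hx
  have hy0 := h y hy
  have hne : p.eval x * p.eval y ≠ 0 := mul_ne_zero hx0 hy0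
  have hneg : p.eval x * p.eval y < 0 := lt_of_le_of_ne hcon hne
  have hcont : ContinuousOn (fun z => p.eval z) (Set.Icc x y) :=
    (Polynomial.continuous p).continuousOn
  rcases mul_neg_iff.mp hneg with ⟨hxp, hyn⟩ | ⟨hxn, hyp⟩
  · have h0 : (0 : ℝ) ∈ Set.Icc (p.eval y) (p.eval x) := ⟨le_of_lt hyn, le_of_lt hxp⟩
    obtain ⟨z, hz, hz0⟩ := intermediate_value_Icc' hxy hcont h0
    exact h z ⟨lt_of_lt_of_le hx.1 hz.1, lt_of_le_of_lt hz.2 hy.2⟩ hz0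
  · have h0 : (0 : ℝ) ∈ Set.Icc (p.eval x) (p.eval y) := ⟨le_of_lt hxn, le_of_lt hyp⟩
    obtain ⟨z, hz, hz0⟩ := intermediate_value_Icc hxy hcont h0
    exact h z ⟨lt_of_lt_of_le hx.1 hz.1, lt_of_le_of_lt hz.2 hy.2⟩ hz0

lemma abs_le_abs_add_of_mul_nonneg {d e : ℝ} (h : 0 ≤ d * e) : |d| ≤ |d + e| := by
  rcases abs_cases d with ⟨h1, h2⟩ <;> rcases abs_cases (d + e) with ⟨h3, h4⟩ <;> nlinarith

set_option maxHeartbeats 1000000 in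
theorem lower_bound_on_interval (f g : Polynomial ℝ) (c : ℝ) (j n : ℕ)
    (hc : c ≠ 0) (hj : 1 ≤ j) (hjn : j - 1 ≤ n)
    (hf : f = Polynomial.C c + Polynomial.X ^ j * g) (hg0 : g.coeff 0 ≠ 0)
    (hn : f.natDegree = n)
    (a r : ℝ) (hr : 0 < r) (hI : 0 < a - r) (har : a / r > 2 * n)
    (hfroot : ∀ x ∈ Set.Ioo (a - r) (a + r), f.eval x ≠ 0)
    (hf1root : ∀ x ∈ Set.Ioo (a - r) (a + r),
      (Polynomial.C (j : ℝ) * g + Polynomial.X * Polynomial.derivative g).eval x ≠ 0) :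
    ∀ t ∈ Set.Ioo (a - r / 2) (a + r / 2),
      |f.eval t| ≥ (r / 8) * t ^ (j - 1) *
        sInf ((fun x => |(Polynomial.C (j : ℝ) * g +
          Polynomial.X * Polynomial.derivative g).eval x|) '' Set.Ioo (a - r) (a + r)) := by
  obtain ⟨k, rfl⟩ : ∃ k, j = k + 1 := ⟨j - 1, by omega⟩
  have hkn : k ≤ n := by omega
  set F1 : Polynomial ℝ := Polynomial.C ((k + 1 : ℕ) : ℝ) * g +
    Polynomial.X * Polynomial.derivative g with hF1def
  intro t ht
  obtain ⟨ht1, ht2⟩ := ht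
  have ha2nr : 2 * (n : ℝ) * r < a := by
    rw [gt_iff_lt, lt_div_iff₀ hr] at har; linarith
  have ht0 : 0 < t := by linarith
  have hIt : t ∈ Set.Ioo (a - r) (a + r) := ⟨by linarith, by linarith⟩
  set m := sInf ((fun x => |Polynomial.eval x F1|) '' Set.Ioo (a - r) (a + r)) with hmdef
  have hbdd : BddBelow ((fun x => |Polynomial.eval x F1|) '' Set.Ioo (a - r) (a + r)) := by
    refine ⟨0, ?_⟩
    rintro _ ⟨x, hx, rfl⟩
    exact abs_nonneg _
  have hm0 : 0 ≤ m := Real.sInf_nonneg (by rintro _ ⟨x, hx, rfl⟩; exact abs_nonneg _)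
  have hmle : ∀ x ∈ Set.Ioo (a - r) (a + r), m ≤ |Polynomial.eval x F1| := by
    intro x hx
    exact csInf_le hbdd ⟨x, hx, rfl⟩
  -- derivative of f
  have hderiv : ∀ x : ℝ, deriv (fun y => Polynomial.eval y f) x =
      x ^ k * Polynomial.eval x F1 := by
    intro x
    rw [Polynomial.deriv, hf, hF1def]
    simp [Polynomial.derivative_X_pow]
    ring
  -- sign facts
  have hFsign := same_sign_aux hf1root
  have hfsign := same_sign_aux hfroot
  have hft0 : Polynomial.eval t f ≠ 0 := hfroot t hIt
  have hF1t0 : Polynomial.eval t F1 ≠ 0 := hf1root t hIt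
  set σ : ℝ := if 0 < Polynomial.eval t f * Polynomial.eval t F1 then 1 else -1 with hσdef
  have hσ : σ = 1 ∨ σ = -1 := by
    rw [hσdef]; split <;> simp
  have hC : 0 < σ * (Polynomial.eval t f * Polynomial.eval t F1) := by
    rw [hσdef]
    split
    · rename_i h; simpa using h
    · rename_i h
      push_neg at h
      have hne : Polynomial.eval t f * Polynomial.eval t F1 ≠ 0 := mul_ne_zero hft0 hF1t0
      have : Polynomial.eval t f * Polynomial.eval t F1 < 0 := lt_of_le_of_ne h hne
      nlinarith
  set s : ℝ := t - r / 2 * σ with hsdef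
  have hsI : s ∈ Set.Ioo (a - r) (a + r) := by
    rcases hσ with h1 | h1 <;> rw [hsdef, h1] <;> constructor <;> · push_cast; linarith
  -- mean value theorem, giving ξ
  have hMVT : ∃ ξ ∈ Set.Ioo (a - r) (a + r), t - r / 2 ≤ ξ ∧
      Polynomial.eval t f - Polynomial.eval s f =
        r / 2 * σ * (ξ ^ k * Polynomial.eval ξ F1) := by
    rcases hσ with h1 | h1
    · -- s = t - r/2 < t
      have hst : s < t := by rw [hsdef, h1]; linarith
      obtain ⟨ξ, hξ, hslope⟩ := exists_deriv_eq_slope (fun y => Polynomial.eval y f) hst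
        (f.continuous_aeval.continuousOn) (f.differentiable.differentiableOn)
      refine ⟨ξ, ⟨by linarith [hξ.1, hsI.1], by linarith [hξ.2, hIt.2]⟩, ?_, ?_⟩
      · rw [hsdef, h1] at hξ; linarith [hξ.1]
      · rw [hderiv] at hslope
        have hts : t - s = r / 2 := by rw [hsdef, h1]; ring
        rw [h1]
        field_simp [hts] at hslope ⊢
        rw [hslope, hts]; field_simp
    · -- s = t + r/2 > t
      have hst : t < s := by rw [hsdef, h1]; linarith
      obtain ⟨ξ, hξ, hslope⟩ := exists_deriv_eq_slope (fun y => Polynomial.eval y f) hst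
        (f.continuous_aeval.continuousOn) (f.differentiable.differentiableOn)
      refine ⟨ξ, ⟨by linarith [hξ.1, hIt.1], by linarith [hξ.2, hsI.2]⟩, ?_, ?_⟩
      · linarith [hξ.1]
      · rw [hderiv] at hslope
        have hts : s - t = r / 2 := by rw [hsdef, h1]; ring
        rw [h1]
        field_simp [hts] at hslope ⊢
        rw [hslope, hts]; field_simp; ring
  obtain ⟨ξ, hξI, hξlow, hd⟩ := hMVT
  have hξ0 : 0 < ξ := by linarith [hξI.1]
  have hξk : 0 < ξ ^ k := pow_pos hξ0 k
  have hA : 0 < Polynomial.eval ξ F1 * Polynomial.eval t F1 := hFsign ξ hξI t hIt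
  have hB : 0 < Polynomial.eval s f * Polynomial.eval t f := hfsign s hsI t hIt
  -- the increment has the same sign as f(s)
  have hsign : 0 < σ * Polynomial.eval ξ F1 * Polynomial.eval s f := by
    have hprod : 0 < (σ * (Polynomial.eval t f * Polynomial.eval t F1)) *
        (Polynomial.eval ξ F1 * Polynomial.eval t F1) *
        (Polynomial.eval s f * Polynomial.eval t f) :=
      mul_pos (mul_pos hC hA) hB
    nlinarith [sq_nonneg (Polynomial.eval t F1 * Polynomial.eval t f), hprod,
      sq_abs (Polynomial.eval t F1 * Polynomial.eval t f)]
  have hdmul : 0 ≤ (Polynomial.eval t f - Polynomial.eval s f) * Polynomial.eval s f := by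
    rw [hd]
    have h := mul_pos (mul_pos (by linarith : (0:ℝ) < r / 2) hξk) hsign
    nlinarith [h]
  -- |f(t)| ≥ |f(t) - f(s)|
  have habs1 : |Polynomial.eval t f - Polynomial.eval s f| ≤ |Polynomial.eval t f| := by
    have := abs_le_abs_add_of_mul_nonneg hdmul
    simpa using this
  have habsσ : |σ| = 1 := by rcases hσ with h1 | h1 <;> rw [h1] <;> simp
  have habs2 : |Polynomial.eval t f - Polynomial.eval s f| =
      r / 2 * (ξ ^ k * |Polynomial.eval ξ F1|) := by
    rw [hd, abs_mul, abs_mul, abs_mul, habsσ, abs_of_pos hξk,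
      abs_of_pos (by linarith : (0:ℝ) < r / 2)]
    ring
  -- lower bound on ξ^k relative to t^k
  have htr2 : 0 < t - r / 2 := by linarith
  have hξk_ge : (t - r / 2) ^ k ≤ ξ ^ k := pow_le_pow_left₀ htr2.le hξlow k
  have hkr : (k : ℝ) * r ≤ 3 / 2 * t := by
    have hk : (k : ℝ) ≤ n := by exact_mod_cast hkn
    have hkr' := mul_le_mul_of_nonneg_right hk hr.le
    linarith
  have hbern : (1 : ℝ) / 4 * t ^ k ≤ (t - r / 2) ^ k := by
    have hx : -2 ≤ -(r / (2 * t)) := by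
      rw [neg_le_neg_iff]
      rw [div_le_iff₀ (by linarith : (0:ℝ) < 2 * t)]
      linarith
    have hbp := one_add_mul_le_pow hx k
    have heq : t - r / 2 = t * (1 + -(r / (2 * t))) := by field_simp; ring
    rw [heq, mul_pow]
    have h14 : (1 : ℝ) / 4 ≤ (1 + -(r / (2 * t))) ^ k := by
      refine le_trans ?_ hbp
      have : (k : ℝ) * (r / (2 * t)) ≤ 3 / 4 := by
        rw [mul_div_assoc'] at *
        rw [div_le_iff₀ (by linarith : (0:ℝ) < 2 * t)]
        linarith
      linarith
    have htk : 0 < t ^ k := pow_pos ht0 k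
    calc (1 : ℝ) / 4 * t ^ k ≤ (1 + -(r / (2 * t))) ^ k * t ^ k := by nlinarith
      _ = t ^ k * (1 + -(r / (2 * t))) ^ k := by ring
  -- put it together
  have hmξ : m ≤ |Polynomial.eval ξ F1| := hmle ξ hξI
  have hstep : r / 8 * t ^ k * m ≤ r / 2 * (ξ ^ k * |Polynomial.eval ξ F1|) := by
    have hr2 : (0:ℝ) ≤ r / 2 := by linarith
    have h1 := mul_le_mul_of_nonneg_left (mul_le_mul_of_nonneg_right hbern hm0) hr2
    have h2 := mul_le_mul_of_nonneg_left (mul_le_mul_of_nonneg_right hξk_ge hm0) hr2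
    have h3 := mul_le_mul_of_nonneg_left (mul_le_mul_of_nonneg_left hmξ hξk.le) hr2
    nlinarith [h1, h2, h3]
  have hfinal : r / 8 * t ^ k * m ≤ |Polynomial.eval t f| := by
    calc r / 8 * t ^ k * m ≤ r / 2 * (ξ ^ k * |Polynomial.eval ξ F1|) := hstep
      _ = |Polynomial.eval t f - Polynomial.eval s f| := habs2.symm
      _ ≤ |Polynomial.eval t f| := habs1
  simpa [hmdef, hF1def, Nat.add_sub_cancel] using hfinal
end

section
/- Let E_ℓ, E_r ≥ 0, not both zero, δ > 0, and suppose Ẽ_ℓ, Ẽ_r satisfy |Ẽ_ℓ - E_ℓ| < 2^{-L} and |Ẽ_r - E_r| < 2^{-L} with 2^{-L} ≤ (δ/(4(1+δ)))·max(E_ℓ, E_r). If Ẽ_ℓ - Ẽ_r > 2·2^{-L} then E_ℓ > E_r; if Ẽ_r - Ẽ_ℓ > 2·2^{-L} then E_r > E_ℓ; and if |Ẽ_ℓ - Ẽ_r| ≤ 2·2^{-L} then (1/(1+δ))·E_ℓ < E_r + 4·2^{-L} and E_r ≤ (1+δ)·E_ℓ + 4·2^{-L}. -/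
theorem soft_predicate_correct (El Er δ : ℝ) (L : ℕ)
    (hEl : 0 ≤ El) (hEr : 0 ≤ Er) (hne : El ≠ 0 ∨ Er ≠ 0) (hδ : 0 < δ)
    (tEl tEr : ℝ)
    (hal : |tEl - El| < (2 : ℝ) ^ (-(L : ℤ))) (har : |tEr - Er| < (2 : ℝ) ^ (-(L : ℤ)))
    (hL : (2 : ℝ) ^ (-(L : ℤ)) ≤ (δ / (4 * (1 + δ))) * max El Er) :
    (tEl - tEr > 2 * (2 : ℝ) ^ (-(L : ℤ)) → El > Er) ∧
    (tEr - tEl > 2 * (2 : ℝ) ^ (-(L : ℤ)) → Er > El) ∧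
    (|tEl - tEr| ≤ 2 * (2 : ℝ) ^ (-(L : ℤ)) →
      (1 / (1 + δ)) * El < Er + 4 * (2 : ℝ) ^ (-(L : ℤ)) ∧
      Er ≤ (1 + δ) * El + 4 * (2 : ℝ) ^ (-(L : ℤ))) := by
  set ε : ℝ := (2 : ℝ) ^ (-(L : ℤ)) with hε
  have hεpos : 0 < ε := by positivity
  rw [abs_lt] at hal har
  obtain ⟨hal1, hal2⟩ := hal
  obtain ⟨har1, har2⟩ := har
  refine ⟨fun h => by linarith, fun h => by linarith, fun h => ?_⟩
  rw [abs_le] at h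
  obtain ⟨h1, h2⟩ := h
  have hfrac : (1 : ℝ) / (1 + δ) ≤ 1 := by
    rw [div_le_one (by linarith)]; linarith
  constructor
  · have : El < Er + 4 * ε := by linarith
    nlinarith [mul_le_mul_of_nonneg_right hfrac hEl]
  · nlinarith [mul_nonneg hδ.le hEl]
end

section
/- Let L, λ be nonnegative reals and let a finite list of disjoint real intervals be recursively modified by merging (replacing by their convex hull) any two intervals I, J whose distance is less than min(2^{-L}, λ·w(I)) until no such pair exists. If the initial list has N intervals of width at most w, then every interval in the final list has width at most (2 + λ)^N · max(2^{-L}, w). -/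
/-- The width of an interval represented by its pair of endpoints. -/
def intervalWidth (I : ℝ × ℝ) : ℝ := I.2 - I.1

/-- The distance between two intervals represented by their endpoints. -/
def intervalDist (I J : ℝ × ℝ) : ℝ := max 0 (max (J.1 - I.2) (I.1 - J.2))

/-- The convex hull (merge) of two intervals. -/
def intervalHull (I J : ℝ × ℝ) : ℝ × ℝ := (min I.1 J.1, max I.2 J.2)

/-- One merging step: two intervals whose distance is less than
`min (2^{-L}) (λ · w(I))` are replaced by their convex hull. -/
inductive MergeStep (L lam : ℝ) : Multiset (ℝ × ℝ) → Multiset (ℝ × ℝ) → Prop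
  | merge (I J : ℝ × ℝ) (S : Multiset (ℝ × ℝ))
      (h : intervalDist I J < min ((2 : ℝ) ^ (-L)) (lam * intervalWidth I)) :
      MergeStep L lam (I ::ₘ J ::ₘ S) (intervalHull I J ::ₘ S)

lemma hull_width_le (I J : ℝ × ℝ) (hI : I.1 ≤ I.2) (hJ : J.1 ≤ J.2) :
    intervalWidth (intervalHull I J) ≤
      intervalWidth I + intervalWidth J + intervalDist I J := by
  have h0 : (0:ℝ) ≤ intervalDist I J := le_max_left _ _
  have hd1 : J.1 - I.2 ≤ intervalDist I J :=
    le_trans (le_max_left _ _) (le_max_right _ _)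
  have hd2 : I.1 - J.2 ≤ intervalDist I J :=
    le_trans (le_max_right _ _) (le_max_right _ _)
  simp only [intervalWidth, intervalHull, min_def, max_def]
  split_ifs <;> linarith

theorem merged_intervals_width_bound (L lam w : ℝ) (hL : 0 ≤ L) (hlam : 0 ≤ lam)
    (hw : 0 ≤ w) (S₀ T : Multiset (ℝ × ℝ)) (N : ℕ) (hN : S₀.card = N)
    (hwf : ∀ I ∈ S₀, I.1 ≤ I.2)
    (hw0 : ∀ I ∈ S₀, intervalWidth I ≤ w)
    (hreach : Relation.ReflTransGen (MergeStep L lam) S₀ T)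
    (hterm : ∀ I ∈ T, ∀ J ∈ T.erase I,
      ¬ intervalDist I J < min ((2 : ℝ) ^ (-L)) (lam * intervalWidth I)) :
    ∀ I ∈ T, intervalWidth I ≤ (2 + lam) ^ N * max ((2 : ℝ) ^ (-L)) w := by
  set B : ℝ := max ((2 : ℝ) ^ (-L)) w with hB
  have hBpos : 0 < B := lt_of_lt_of_le (Real.rpow_pos_of_pos two_pos (-L)) (le_max_left _ _)
  have h2lam : (1 : ℝ) ≤ 2 + lam := by linarith
  -- invariant along the reduction
  have key : ∃ m : ℕ, T.card + m = N ∧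
      ∀ I ∈ T, I.1 ≤ I.2 ∧ intervalWidth I ≤ (2 + lam) ^ m * B := by
    clear hterm
    induction hreach with
    | refl =>
      exact ⟨0, by simpa using hN, fun I hI => ⟨hwf I hI,
        by rw [pow_zero, one_mul]; exact (hw0 I hI).trans (le_max_right _ _)⟩⟩
    | tail hstep step ih =>
      obtain ⟨m, hcard, hbound⟩ := ih
      cases step with
      | merge I J S h =>
        have hI := hbound I (by simp)
        have hJ := hbound J (by simp [Multiset.mem_cons])
        refine ⟨m + 1, ?_, ?_⟩
        · simp only [Multiset.card_cons] at hcard ⊢; omega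
        · intro K hK
          rw [Multiset.mem_cons] at hK
          rcases hK with rfl | hK
          · constructor
            · exact le_trans (min_le_left _ _) (le_trans hI.1 (le_max_left _ _))
            · have hd : intervalDist I J ≤ lam * intervalWidth I :=
                le_of_lt (lt_of_lt_of_le h (min_le_right _ _))
              have hwI : 0 ≤ intervalWidth I := by
                simp only [intervalWidth]; linarith [hI.1]
              have h1 : intervalWidth (intervalHull I J) ≤
                  intervalWidth I + intervalWidth J + lam * intervalWidth I := by
                linarith [hull_width_le I J hI.1 hJ.1]
              have hBm : (0:ℝ) < (2 + lam) ^ m * B :=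
                mul_pos (pow_pos (by linarith) m) hBpos
              have : intervalWidth I + intervalWidth J + lam * intervalWidth I ≤
                  (2 + lam) * ((2 + lam) ^ m * B) := by
                have h3 : lam * intervalWidth I ≤ lam * ((2 + lam) ^ m * B) :=
                  mul_le_mul_of_nonneg_left hI.2 hlam
                nlinarith [hI.2, hJ.2]
              calc intervalWidth (intervalHull I J) ≤ (2 + lam) * ((2 + lam) ^ m * B) :=
                    le_trans h1 this
                _ = (2 + lam) ^ (m + 1) * B := by ring
          · have hKb := hbound K (by simp [Multiset.mem_cons, hK])
            refine ⟨hKb.1, hKb.2.trans ?_⟩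
            apply mul_le_mul_of_nonneg_right _ hBpos.le
            exact pow_le_pow_right₀ h2lam (by omega)
  obtain ⟨m, hm, hbound⟩ := key
  intro I hI
  refine (hbound I hI).2.trans ?_
  apply mul_le_mul_of_nonneg_right _ hBpos.le
  exact pow_le_pow_right₀ h2lam (by omega)
end
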